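/- arXiv:2410.03575 — 6 statements merged into one kernel-verified Lean document; each statement's English description precedes it below -/
import Mathlib

section
/- Let A ∈ ℂ^{n×n}, B ∈ ℂ^{d×d}, E ∈ ℂ^{n×d}. Then L_exp(2A, 2B, 2E) = exp(A) · L_exp(A, B, E) + L_exp(A, B, E) · exp(B). -/
/-- `L_exp(A, B, E)` is the `(1,2)` block of `exp [[A, E],[0, B]]`. -/
noncomputable def Lexp {n d : ℕ} (A : Matrix (Fin n) (Fin n) ℂ) (B : Matrix (Fin d) (Fin d) ℂ)
    (E : Matrix (Fin n) (Fin d) ℂ) : Matrix (Fin n) (Fin d) ℂ :=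
  (NormedSpace.exp (Matrix.fromBlocks A E 0 B)).toBlocks₁₂

section aux

variable {n d : ℕ}

private def L11 : Matrix (Fin n ⊕ Fin d) (Fin n ⊕ Fin d) ℂ →ₗ[ℂ] Matrix (Fin n) (Fin n) ℂ where
  toFun := Matrix.toBlocks₁₁
  map_add' _ _ := rfl
  map_smul' _ _ := rfl

private def L21 : Matrix (Fin n ⊕ Fin d) (Fin n ⊕ Fin d) ℂ →ₗ[ℂ] Matrix (Fin d) (Fin n) ℂ where
  toFun := Matrix.toBlocks₂₁
  map_add' _ _ := rfl
  map_smul' _ _ := rfl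

private def L22 : Matrix (Fin n ⊕ Fin d) (Fin n ⊕ Fin d) ℂ →ₗ[ℂ] Matrix (Fin d) (Fin d) ℂ where
  toFun := Matrix.toBlocks₂₂
  map_add' _ _ := rfl
  map_smul' _ _ := rfl

private lemma pow_blocks (A : Matrix (Fin n) (Fin n) ℂ) (B : Matrix (Fin d) (Fin d) ℂ)
    (E : Matrix (Fin n) (Fin d) ℂ) (k : ℕ) :
    ((Matrix.fromBlocks A E 0 B) ^ k).toBlocks₁₁ = A ^ k ∧
    ((Matrix.fromBlocks A E 0 B) ^ k).toBlocks₂₁ = 0 ∧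
    ((Matrix.fromBlocks A E 0 B) ^ k).toBlocks₂₂ = B ^ k := by
  induction k with
  | zero =>
    rw [pow_zero, pow_zero, pow_zero,
      show (1 : Matrix (Fin n ⊕ Fin d) (Fin n ⊕ Fin d) ℂ) = Matrix.fromBlocks 1 0 0 1 from
        Matrix.fromBlocks_one.symm]
    exact ⟨Matrix.toBlocks_fromBlocks₁₁ .., Matrix.toBlocks_fromBlocks₂₁ ..,
      Matrix.toBlocks_fromBlocks₂₂ ..⟩
  | succ k ih =>
    obtain ⟨h11, h21, h22⟩ := ih
    have hM : (Matrix.fromBlocks A E 0 B) ^ k =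
        Matrix.fromBlocks (A ^ k) ((Matrix.fromBlocks A E 0 B ^ k).toBlocks₁₂) 0 (B ^ k) := by
      conv_lhs => rw [← Matrix.fromBlocks_toBlocks ((Matrix.fromBlocks A E 0 B) ^ k)]
      rw [h11, h21, h22]
    rw [pow_succ, pow_succ, pow_succ, hM, Matrix.fromBlocks_multiply]
    simp [Matrix.toBlocks_fromBlocks₁₁, Matrix.toBlocks_fromBlocks₂₁,
      Matrix.toBlocks_fromBlocks₂₂]

private lemma exp_blocks (A : Matrix (Fin n) (Fin n) ℂ) (B : Matrix (Fin d) (Fin d) ℂ)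
    (E : Matrix (Fin n) (Fin d) ℂ) :
    (NormedSpace.exp (Matrix.fromBlocks A E 0 B)).toBlocks₁₁ = NormedSpace.exp A ∧
    (NormedSpace.exp (Matrix.fromBlocks A E 0 B)).toBlocks₂₁ = 0 ∧
    (NormedSpace.exp (Matrix.fromBlocks A E 0 B)).toBlocks₂₂ = NormedSpace.exp B := by
  letI : SeminormedRing (Matrix (Fin n ⊕ Fin d) (Fin n ⊕ Fin d) ℂ) := Matrix.linftyOpSemiNormedRing
  letI : NormedRing (Matrix (Fin n ⊕ Fin d) (Fin n ⊕ Fin d) ℂ) := Matrix.linftyOpNormedRing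
  letI : NormedAlgebra ℂ (Matrix (Fin n ⊕ Fin d) (Fin n ⊕ Fin d) ℂ) := Matrix.linftyOpNormedAlgebra
  letI : SeminormedRing (Matrix (Fin n) (Fin n) ℂ) := Matrix.linftyOpSemiNormedRing
  letI : NormedRing (Matrix (Fin n) (Fin n) ℂ) := Matrix.linftyOpNormedRing
  letI : NormedAlgebra ℂ (Matrix (Fin n) (Fin n) ℂ) := Matrix.linftyOpNormedAlgebra
  letI : SeminormedRing (Matrix (Fin d) (Fin d) ℂ) := Matrix.linftyOpSemiNormedRing
  letI : NormedRing (Matrix (Fin d) (Fin d) ℂ) := Matrix.linftyOpNormedRing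
  letI : NormedAlgebra ℂ (Matrix (Fin d) (Fin d) ℂ) := Matrix.linftyOpNormedAlgebra
  set M := Matrix.fromBlocks A E 0 B with hMdef
  have hsum : Summable (fun k : ℕ => (k.factorial : ℂ)⁻¹ • M ^ k) :=
    NormedSpace.expSeries_summable' (𝕂 := ℂ) M
  have hexp : NormedSpace.exp M = ∑' k : ℕ, (k.factorial : ℂ)⁻¹ • M ^ k :=
    congrFun (NormedSpace.exp_eq_tsum ℂ) M
  refine ⟨?_, ?_, ?_⟩
  · have := ((L11 (n := n) (d := d)).toContinuousLinearMap).map_tsum hsum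
    rw [hexp]
    calc (∑' k : ℕ, (k.factorial : ℂ)⁻¹ • M ^ k).toBlocks₁₁
        = ∑' k : ℕ, (L11 (n := n) (d := d)).toContinuousLinearMap
            ((k.factorial : ℂ)⁻¹ • M ^ k) := this
      _ = ∑' k : ℕ, (k.factorial : ℂ)⁻¹ • A ^ k := by
          congr 1; funext k
          rw [map_smul]
          exact congrArg _ (pow_blocks A B E k).1
      _ = NormedSpace.exp A := (congrFun (NormedSpace.exp_eq_tsum ℂ) A).symm
  · have := ((L21 (n := n) (d := d)).toContinuousLinearMap).map_tsum hsum
    rw [hexp]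
    calc (∑' k : ℕ, (k.factorial : ℂ)⁻¹ • M ^ k).toBlocks₂₁
        = ∑' k : ℕ, (L21 (n := n) (d := d)).toContinuousLinearMap
            ((k.factorial : ℂ)⁻¹ • M ^ k) := this
      _ = ∑' k : ℕ, (0 : Matrix (Fin d) (Fin n) ℂ) := by
          congr 1; funext k
          rw [map_smul]
          rw [show (LinearMap.toContinuousLinearMap (L21 (n := n) (d := d))) (M ^ k)
              = (M ^ k).toBlocks₂₁ from rfl, (pow_blocks A B E k).2.1, smul_zero]
      _ = 0 := tsum_zero
  · have := ((L22 (n := n) (d := d)).toContinuousLinearMap).map_tsum hsum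
    rw [hexp]
    calc (∑' k : ℕ, (k.factorial : ℂ)⁻¹ • M ^ k).toBlocks₂₂
        = ∑' k : ℕ, (L22 (n := n) (d := d)).toContinuousLinearMap
            ((k.factorial : ℂ)⁻¹ • M ^ k) := this
      _ = ∑' k : ℕ, (k.factorial : ℂ)⁻¹ • B ^ k := by
          congr 1; funext k
          rw [map_smul]
          exact congrArg _ (pow_blocks A B E k).2.2
      _ = NormedSpace.exp B := (congrFun (NormedSpace.exp_eq_tsum ℂ) B).symm

end aux

/-- The product (doubling) rule:
`L_exp(2A, 2B, 2E) = exp(A) ⬝ L_exp(A, B, E) + L_exp(A, B, E) ⬝ exp(B)`. -/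
theorem Lexp_double {n d : ℕ} (A : Matrix (Fin n) (Fin n) ℂ) (B : Matrix (Fin d) (Fin d) ℂ)
    (E : Matrix (Fin n) (Fin d) ℂ) :
    Lexp ((2 : ℂ) • A) ((2 : ℂ) • B) ((2 : ℂ) • E) =
      NormedSpace.exp A * Lexp A B E + Lexp A B E * NormedSpace.exp B := by
  set M := Matrix.fromBlocks A E 0 B with hMdef
  have h2M : Matrix.fromBlocks ((2:ℂ) • A) ((2:ℂ) • E) 0 ((2:ℂ) • B) = (2:ℂ) • M := by
    rw [hMdef, Matrix.fromBlocks_smul, smul_zero]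
  have hexp2 : NormedSpace.exp ((2:ℂ) • M) = NormedSpace.exp M * NormedSpace.exp M := by
    rw [two_smul]; exact Matrix.exp_add_of_commute M M (Commute.refl M)
  obtain ⟨h11, h21, h22⟩ := exp_blocks A B E
  have hE : NormedSpace.exp M =
      Matrix.fromBlocks (NormedSpace.exp A) (Lexp A B E) 0 (NormedSpace.exp B) := by
    conv_lhs => rw [← Matrix.fromBlocks_toBlocks (NormedSpace.exp M)]
    rw [h11, h21, h22]; rfl
  unfold Lexp
  rw [h2M, hexp2, hE, Matrix.fromBlocks_multiply]
  simp [Matrix.toBlocks_fromBlocks₁₂]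
end

section
/- Let A ∈ ℂ^{n×n}, B ∈ ℂ^{d×d}, E ∈ ℂ^{n×d}, and let D = L_exp(A, B, E). Then D satisfies the Sylvester equation A·D − D·B = exp(A)·E − E·exp(B). -/
open NormedSpace
open scoped Nat

section aux

variable {n d : ℕ}

theorem pow_fromBlocks (A : Matrix (Fin n) (Fin n) ℂ) (B : Matrix (Fin d) (Fin d) ℂ)
    (E : Matrix (Fin n) (Fin d) ℂ) (k : ℕ) :
    ∃ D, (Matrix.fromBlocks A E 0 B) ^ k = Matrix.fromBlocks (A ^ k) D 0 (B ^ k) := by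
  induction k with
  | zero => exact ⟨0, by rw [pow_zero, pow_zero, pow_zero, ← Matrix.fromBlocks_one]⟩
  | succ k ih =>
    obtain ⟨D, hD⟩ := ih
    refine ⟨A ^ k * E + D * B, ?_⟩
    rw [pow_succ, hD, Matrix.fromBlocks_multiply]
    simp [pow_succ]

/-- The exponential of a block upper triangular matrix. -/
theorem exp_fromBlocks (A : Matrix (Fin n) (Fin n) ℂ) (B : Matrix (Fin d) (Fin d) ℂ)
    (E : Matrix (Fin n) (Fin d) ℂ) :
    exp (Matrix.fromBlocks A E 0 B) =
      Matrix.fromBlocks (exp A) (Lexp A B E) 0 (exp B) := by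
  letI : SeminormedRing (Matrix (Fin n ⊕ Fin d) (Fin n ⊕ Fin d) ℂ) :=
    Matrix.linftyOpSemiNormedRing
  letI : NormedRing (Matrix (Fin n ⊕ Fin d) (Fin n ⊕ Fin d) ℂ) := Matrix.linftyOpNormedRing
  letI : NormedAlgebra ℂ (Matrix (Fin n ⊕ Fin d) (Fin n ⊕ Fin d) ℂ) :=
    Matrix.linftyOpNormedAlgebra
  set M := Matrix.fromBlocks A E 0 B with hM
  have hsum : Summable fun k : ℕ => (k !⁻¹ : ℂ) • M ^ k := expSeries_summable' M
  -- continuous linear maps extracting blocks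
  let lm₁₁ : Matrix (Fin n ⊕ Fin d) (Fin n ⊕ Fin d) ℂ →ₗ[ℂ] Matrix (Fin n) (Fin n) ℂ :=
    { toFun := Matrix.toBlocks₁₁, map_add' := fun _ _ => rfl, map_smul' := fun _ _ => rfl }
  let lm₂₁ : Matrix (Fin n ⊕ Fin d) (Fin n ⊕ Fin d) ℂ →ₗ[ℂ] Matrix (Fin d) (Fin n) ℂ :=
    { toFun := Matrix.toBlocks₂₁, map_add' := fun _ _ => rfl, map_smul' := fun _ _ => rfl }
  let lm₂₂ : Matrix (Fin n ⊕ Fin d) (Fin n ⊕ Fin d) ℂ →ₗ[ℂ] Matrix (Fin d) (Fin d) ℂ :=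
    { toFun := Matrix.toBlocks₂₂, map_add' := fun _ _ => rfl, map_smul' := fun _ _ => rfl }
  let L₁₁ : Matrix (Fin n ⊕ Fin d) (Fin n ⊕ Fin d) ℂ →L[ℂ] Matrix (Fin n) (Fin n) ℂ :=
    ⟨lm₁₁, lm₁₁.continuous_of_finiteDimensional⟩
  let L₂₁ : Matrix (Fin n ⊕ Fin d) (Fin n ⊕ Fin d) ℂ →L[ℂ] Matrix (Fin d) (Fin n) ℂ :=
    ⟨lm₂₁, lm₂₁.continuous_of_finiteDimensional⟩
  let L₂₂ : Matrix (Fin n ⊕ Fin d) (Fin n ⊕ Fin d) ℂ →L[ℂ] Matrix (Fin d) (Fin d) ℂ :=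
    ⟨lm₂₂, lm₂₂.continuous_of_finiteDimensional⟩
  have h11 : (exp M).toBlocks₁₁ = exp A := by
    have : L₁₁ (exp M) = ∑' k : ℕ, (k !⁻¹ : ℂ) • A ^ k := by
      rw [exp_eq_tsum ℂ, L₁₁.map_tsum hsum]
      congr 1
      funext k
      obtain ⟨D, hD⟩ := pow_fromBlocks A B E k
      show ((k !⁻¹ : ℂ) • M ^ k).toBlocks₁₁ = _
      rw [hM, hD, Matrix.fromBlocks_smul]
      simp [Matrix.toBlocks_fromBlocks₁₁]
    exact this.trans (congrFun (exp_eq_tsum ℂ) A).symm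
  have h21 : (exp M).toBlocks₂₁ = 0 := by
    have : L₂₁ (exp M) = ∑' k : ℕ, (0 : Matrix (Fin d) (Fin n) ℂ) := by
      rw [exp_eq_tsum ℂ, L₂₁.map_tsum hsum]
      congr 1
      funext k
      obtain ⟨D, hD⟩ := pow_fromBlocks A B E k
      show ((k !⁻¹ : ℂ) • M ^ k).toBlocks₂₁ = _
      rw [hM, hD, Matrix.fromBlocks_smul]
      simp [Matrix.toBlocks_fromBlocks₂₁]
    exact this.trans tsum_zero
  have h22 : (exp M).toBlocks₂₂ = exp B := by
    have : L₂₂ (exp M) = ∑' k : ℕ, (k !⁻¹ : ℂ) • B ^ k := by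
      rw [exp_eq_tsum ℂ, L₂₂.map_tsum hsum]
      congr 1
      funext k
      obtain ⟨D, hD⟩ := pow_fromBlocks A B E k
      show ((k !⁻¹ : ℂ) • M ^ k).toBlocks₂₂ = _
      rw [hM, hD, Matrix.fromBlocks_smul]
      simp [Matrix.toBlocks_fromBlocks₂₂]
    exact this.trans (congrFun (exp_eq_tsum ℂ) B).symm
  conv_lhs => rw [← Matrix.fromBlocks_toBlocks (exp M)]
  rw [h11, h21, h22]
  rfl

end aux

/-- `D = L_exp(A, B, E)` satisfies the Sylvester equation
`A⬝D − D⬝B = exp(A)⬝E − E⬝exp(B)`. -/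
theorem Lexp_sylvester {n d : ℕ} (A : Matrix (Fin n) (Fin n) ℂ)
    (B : Matrix (Fin d) (Fin d) ℂ) (E : Matrix (Fin n) (Fin d) ℂ) :
    A * Lexp A B E - Lexp A B E * B =
      NormedSpace.exp A * E - E * NormedSpace.exp B := by
  set M := Matrix.fromBlocks A E 0 B with hM
  have hcomm : M * exp M = exp M * M := (Commute.refl M).exp_right
  rw [exp_fromBlocks A B E, hM, Matrix.fromBlocks_multiply, Matrix.fromBlocks_multiply] at hcomm
  have h12 := (Matrix.fromBlocks_inj.mp hcomm).2.1
  -- h12 : A * Lexp A B E + E * exp B = exp A * E + Lexp A B E * B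
  linear_combination (norm := abel) h12
end

section
/- Let A ∈ ℂ^{n×n}, B ∈ ℂ^{d×d}, E ∈ ℂ^{n×d}. Suppose the spectra of A and B are disjoint (spectrum ℂ A ∩ spectrum ℂ B = ∅). Then L_exp(A, B, E) is the unique matrix X ∈ ℂ^{n×d} satisfying the Sylvester equation A·X − X·B = exp(A)·E − E·exp(B). -/
open Matrix Polynomial

namespace LexpAux

/-- The exponential series of a matrix converges (w.r.t. the Pi topology). -/
lemma matrix_hasSum_exp {m : Type*} [Fintype m] [DecidableEq m] (M : Matrix m m ℂ) :
    HasSum (fun k : ℕ => ((k.factorial : ℂ)⁻¹) • M ^ k) (NormedSpace.exp M) := by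
  letI : SeminormedRing (Matrix m m ℂ) := Matrix.linftyOpSemiNormedRing
  letI : NormedRing (Matrix m m ℂ) := Matrix.linftyOpNormedRing
  letI : NormedAlgebra ℂ (Matrix m m ℂ) := Matrix.linftyOpNormedAlgebra
  exact NormedSpace.exp_series_hasSum_exp' M

lemma pow_fromBlocks {m p : Type*} [Fintype m] [DecidableEq m] [Fintype p] [DecidableEq p]
    (A : Matrix m m ℂ) (B : Matrix p p ℂ) (E : Matrix m p ℂ) (k : ℕ) :
    ∃ F, (Matrix.fromBlocks A E 0 B) ^ k = Matrix.fromBlocks (A ^ k) F 0 (B ^ k) := by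
  induction k with
  | zero => exact ⟨0, by simp [Matrix.fromBlocks_one]⟩
  | succ k ih =>
    obtain ⟨F, hF⟩ := ih
    refine ⟨A ^ k * E + F * B, ?_⟩
    rw [pow_succ, hF, Matrix.fromBlocks_multiply]
    simp [pow_succ]

section blockHoms

variable {m p : Type*} [Fintype m] [DecidableEq m] [Fintype p] [DecidableEq p]

set_option linter.unusedSectionVars false

/-- `toBlocks₁₁` as an `AddMonoidHom`. -/
def tb11 : Matrix (m ⊕ p) (m ⊕ p) ℂ →+ Matrix m m ℂ :=
  AddMonoidHom.mk' Matrix.toBlocks₁₁ (fun _ _ => rfl)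

def tb21 : Matrix (m ⊕ p) (m ⊕ p) ℂ →+ Matrix p m ℂ :=
  AddMonoidHom.mk' Matrix.toBlocks₂₁ (fun _ _ => rfl)

def tb22 : Matrix (m ⊕ p) (m ⊕ p) ℂ →+ Matrix p p ℂ :=
  AddMonoidHom.mk' Matrix.toBlocks₂₂ (fun _ _ => rfl)

lemma continuous_tb11 : Continuous (tb11 (m := m) (p := p)) := by
  apply continuous_matrix
  intro i j
  exact (continuous_apply (Sum.inl j)).comp (continuous_apply (Sum.inl i))

lemma continuous_tb21 : Continuous (tb21 (m := m) (p := p)) := by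
  apply continuous_matrix
  intro i j
  exact (continuous_apply (Sum.inl j)).comp (continuous_apply (Sum.inr i))

lemma continuous_tb22 : Continuous (tb22 (m := m) (p := p)) := by
  apply continuous_matrix
  intro i j
  exact (continuous_apply (Sum.inr j)).comp (continuous_apply (Sum.inr i))

lemma exp_fromBlocks (A : Matrix m m ℂ) (B : Matrix p p ℂ) (E : Matrix m p ℂ) :
    NormedSpace.exp (Matrix.fromBlocks A E 0 B) =
      Matrix.fromBlocks (NormedSpace.exp A)
        ((NormedSpace.exp (Matrix.fromBlocks A E 0 B)).toBlocks₁₂) 0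
        (NormedSpace.exp B) := by
  set M := Matrix.fromBlocks A E 0 B with hM
  have hMsum := matrix_hasSum_exp M
  have h11 : (NormedSpace.exp M).toBlocks₁₁ = NormedSpace.exp A := by
    have h1 := hMsum.map tb11 continuous_tb11
    have h2 : (fun k : ℕ => tb11 (((k.factorial : ℂ)⁻¹) • M ^ k)) =
        fun k : ℕ => ((k.factorial : ℂ)⁻¹) • A ^ k := by
      funext k
      obtain ⟨F, hF⟩ := pow_fromBlocks A B E k
      show (((k.factorial : ℂ)⁻¹) • M ^ k).toBlocks₁₁ = _
      rw [hF, Matrix.fromBlocks_smul, Matrix.toBlocks_fromBlocks₁₁]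
    rw [Function.comp_def] at h1
    rw [h2] at h1
    exact h1.unique (matrix_hasSum_exp A)
  have h21 : (NormedSpace.exp M).toBlocks₂₁ = 0 := by
    have h1 := hMsum.map tb21 continuous_tb21
    have h2 : (fun k : ℕ => tb21 (((k.factorial : ℂ)⁻¹) • M ^ k)) =
        fun _ : ℕ => (0 : Matrix p m ℂ) := by
      funext k
      obtain ⟨F, hF⟩ := pow_fromBlocks A B E k
      show (((k.factorial : ℂ)⁻¹) • M ^ k).toBlocks₂₁ = _
      rw [hF, Matrix.fromBlocks_smul, Matrix.toBlocks_fromBlocks₂₁, smul_zero]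
    rw [Function.comp_def] at h1
    rw [h2] at h1
    exact h1.unique hasSum_zero
  have h22 : (NormedSpace.exp M).toBlocks₂₂ = NormedSpace.exp B := by
    have h1 := hMsum.map tb22 continuous_tb22
    have h2 : (fun k : ℕ => tb22 (((k.factorial : ℂ)⁻¹) • M ^ k)) =
        fun k : ℕ => ((k.factorial : ℂ)⁻¹) • B ^ k := by
      funext k
      obtain ⟨F, hF⟩ := pow_fromBlocks A B E k
      show (((k.factorial : ℂ)⁻¹) • M ^ k).toBlocks₂₂ = _
      rw [hF, Matrix.fromBlocks_smul, Matrix.toBlocks_fromBlocks₂₂]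
    rw [Function.comp_def] at h1
    rw [h2] at h1
    exact h1.unique (matrix_hasSum_exp B)
  conv_lhs => rw [← Matrix.fromBlocks_toBlocks (NormedSpace.exp M)]
  rw [h11, h21, h22]

end blockHoms

/-- The value of the characteristic polynomial at `μ`. -/
lemma eval_charpoly {p : Type*} [Fintype p] [DecidableEq p] (B : Matrix p p ℂ) (μ : ℂ) :
    (Matrix.charpoly B).eval μ = (Matrix.diagonal (fun _ => μ) - B).det := by
  rw [Matrix.charpoly, ← Polynomial.coe_evalRingHom, RingHom.map_det]
  congr 1
  ext i j
  by_cases hij : i = j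
  · subst hij
    simp [Matrix.charmatrix_apply_eq]
  · simp [Matrix.charmatrix_apply_ne _ _ _ hij, Matrix.diagonal_apply_ne _ hij]

lemma sylvester_inj {n d : ℕ} (A : Matrix (Fin n) (Fin n) ℂ)
    (B : Matrix (Fin d) (Fin d) ℂ)
    (h : spectrum ℂ A ∩ spectrum ℂ B = ∅)
    (Z : Matrix (Fin n) (Fin d) ℂ) (hZ : A * Z = Z * B) : Z = 0 := by
  rcases Nat.eq_zero_or_pos d with hd | hd
  · subst hd
    ext i j
    exact j.elim0
  -- powers
  have hpow : ∀ k : ℕ, A ^ k * Z = Z * B ^ k := by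
    intro k
    induction k with
    | zero => simp
    | succ k ih =>
      rw [pow_succ, pow_succ, Matrix.mul_assoc, hZ, ← Matrix.mul_assoc, ih, Matrix.mul_assoc]
  have haeval : ∀ q : ℂ[X], (Polynomial.aeval A q) * Z = Z * Polynomial.aeval B q := by
    intro q
    induction q using Polynomial.induction_on' with
    | add q r hq hr => rw [map_add, map_add, Matrix.add_mul, Matrix.mul_add, hq, hr]
    | monomial k c =>
      rw [Polynomial.aeval_monomial, Polynomial.aeval_monomial, ← Algebra.smul_def,
        ← Algebra.smul_def, Matrix.smul_mul, hpow, Matrix.mul_smul]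
  set q := Matrix.charpoly B with hq
  have hZq : (Polynomial.aeval A q) * Z = 0 := by
    rw [haeval, Matrix.aeval_self_charpoly, Matrix.mul_zero]
  have hdeg : 0 < q.degree := by
    rw [hq, Matrix.charpoly_degree_eq_dim, Fintype.card_fin]
    exact_mod_cast hd
  have hunit : IsUnit (Polynomial.aeval A q) := by
    by_contra hu
    have h0 : (0 : ℂ) ∈ spectrum ℂ (Polynomial.aeval A q) := by
      rw [spectrum.mem_iff]
      simpa using hu
    rw [spectrum.map_polynomial_aeval_of_degree_pos A q hdeg] at h0
    obtain ⟨μ, hμA, hμq⟩ := h0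
    -- μ is a root of charpoly B, hence μ ∈ spectrum ℂ B
    have hμB : μ ∈ spectrum ℂ B := by
      rw [spectrum.mem_iff]
      intro hcon
      have hdet : IsUnit (algebraMap ℂ (Matrix (Fin d) (Fin d) ℂ) μ - B).det :=
        (Matrix.isUnit_iff_isUnit_det _).mp hcon
      have hne : (Matrix.charpoly B).eval μ ≠ 0 := by
        rw [eval_charpoly]
        have halg : algebraMap ℂ (Matrix (Fin d) (Fin d) ℂ) μ
            = Matrix.diagonal (fun _ => μ) := by
          ext i j
          simp [Matrix.algebraMap_matrix_apply, Matrix.diagonal]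
        rw [← halg]
        exact hdet.ne_zero
      exact hne hμq
    have hmem : μ ∈ spectrum ℂ A ∩ spectrum ℂ B := ⟨hμA, hμB⟩
    rw [h] at hmem
    exact hmem
  calc Z = (1 : Matrix (Fin n) (Fin n) ℂ) * Z := (Matrix.one_mul Z).symm
    _ = (↑hunit.unit⁻¹ * Polynomial.aeval A q) * Z := by
        rw [IsUnit.val_inv_mul]
    _ = (↑hunit.unit⁻¹ : Matrix (Fin n) (Fin n) ℂ) * ((Polynomial.aeval A q) * Z) := by rw [Matrix.mul_assoc]
    _ = 0 := by rw [hZq, Matrix.mul_zero]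

end LexpAux

namespace LexpAux

/-- `Lexp` satisfies the Sylvester equation. -/
lemma lexp_sylvester {n d : ℕ} (A : Matrix (Fin n) (Fin n) ℂ) (B : Matrix (Fin d) (Fin d) ℂ)
    (E : Matrix (Fin n) (Fin d) ℂ) :
    A * Lexp A B E - Lexp A B E * B =
      NormedSpace.exp A * E - E * NormedSpace.exp B := by
  set M := Matrix.fromBlocks A E 0 B with hM
  have hcomm : M * NormedSpace.exp M = NormedSpace.exp M * M := by
    letI : SeminormedRing (Matrix (Fin n ⊕ Fin d) (Fin n ⊕ Fin d) ℂ) :=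
      Matrix.linftyOpSemiNormedRing
    letI : NormedRing (Matrix (Fin n ⊕ Fin d) (Fin n ⊕ Fin d) ℂ) := Matrix.linftyOpNormedRing
    letI : NormedAlgebra ℂ (Matrix (Fin n ⊕ Fin d) (Fin n ⊕ Fin d) ℂ) :=
      Matrix.linftyOpNormedAlgebra
    exact ((Commute.refl M).exp_right).eq
  have hexp := exp_fromBlocks A B E
  rw [← hM] at hexp
  have hL : (NormedSpace.exp M).toBlocks₁₂ = Lexp A B E := rfl
  rw [hexp, hL, hM, Matrix.fromBlocks_multiply, Matrix.fromBlocks_multiply] at hcomm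
  have h12 := congrArg Matrix.toBlocks₁₂ hcomm
  simp only [Matrix.toBlocks_fromBlocks₁₂] at h12
  rw [sub_eq_sub_iff_add_eq_add]
  exact h12

end LexpAux

/-- If the spectra of `A` and `B` are disjoint, then `L_exp(A, B, E)` is the unique
solution `X` of the Sylvester equation `A⬝X − X⬝B = exp(A)⬝E − E⬝exp(B)`. -/
theorem Lexp_unique_sylvester_solution {n d : ℕ} (A : Matrix (Fin n) (Fin n) ℂ)
    (B : Matrix (Fin d) (Fin d) ℂ) (E : Matrix (Fin n) (Fin d) ℂ)
    (h : spectrum ℂ A ∩ spectrum ℂ B = ∅) :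
    ∀ X : Matrix (Fin n) (Fin d) ℂ,
      A * X - X * B = NormedSpace.exp A * E - E * NormedSpace.exp B ↔
        X = Lexp A B E := by
  intro X
  constructor
  · intro hX
    have hL := LexpAux.lexp_sylvester A B E
    have heq : A * X - X * B = A * Lexp A B E - Lexp A B E * B := hX.trans hL.symm
    have hZ : A * (X - Lexp A B E) = (X - Lexp A B E) * B := by
      rw [Matrix.mul_sub, Matrix.sub_mul]
      rw [sub_eq_sub_iff_add_eq_add] at heq ⊢
      exact heq.trans (add_comm _ _)
    have hzero := LexpAux.sylvester_inj A B h (X - Lexp A B E) hZ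
    rwa [sub_eq_zero] at hzero
  · rintro rfl
    exact LexpAux.lexp_sylvester A B E
end

section
/- Let A ∈ ℂ^{n×n}, B ∈ ℂ^{d×d}, E ∈ ℂ^{n×d}. Then L_exp(A, B, E) = ∫₀¹ exp(tA) · E · exp((1−t)B) dt, where the integral of the matrix-valued function of t ∈ [0,1] is taken entrywise (equivalently, as a Bochner integral in the finite-dimensional normed space of n×d complex matrices). -/
attribute [local instance] Matrix.linftyOpNormedAddCommGroup Matrix.linftyOpNormedSpace

attribute [local instance] Matrix.linftyOpNormedRing Matrix.linftyOpNormedAlgebra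

open NormedSpace Matrix

open NormedSpace Matrix

section Aux
variable {n d : ℕ}

/-- `toBlocks₁₂` as a continuous linear map. -/
noncomputable def tb12 : Matrix (Fin n ⊕ Fin d) (Fin n ⊕ Fin d) ℂ →L[ℂ] Matrix (Fin n) (Fin d) ℂ :=
  LinearMap.toContinuousLinearMap
    { toFun := Matrix.toBlocks₁₂, map_add' := fun _ _ => rfl, map_smul' := fun _ _ => rfl }

noncomputable def tb11 : Matrix (Fin n ⊕ Fin d) (Fin n ⊕ Fin d) ℂ →L[ℂ] Matrix (Fin n) (Fin n) ℂ :=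
  LinearMap.toContinuousLinearMap
    { toFun := Matrix.toBlocks₁₁, map_add' := fun _ _ => rfl, map_smul' := fun _ _ => rfl }

noncomputable def tb21 : Matrix (Fin n ⊕ Fin d) (Fin n ⊕ Fin d) ℂ →L[ℂ] Matrix (Fin d) (Fin n) ℂ :=
  LinearMap.toContinuousLinearMap
    { toFun := Matrix.toBlocks₂₁, map_add' := fun _ _ => rfl, map_smul' := fun _ _ => rfl }

noncomputable def tb22 : Matrix (Fin n ⊕ Fin d) (Fin n ⊕ Fin d) ℂ →L[ℂ] Matrix (Fin d) (Fin d) ℂ :=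
  LinearMap.toContinuousLinearMap
    { toFun := Matrix.toBlocks₂₂, map_add' := fun _ _ => rfl, map_smul' := fun _ _ => rfl }

lemma tri_pow (A : Matrix (Fin n) (Fin n) ℂ) (B : Matrix (Fin d) (Fin d) ℂ)
    (E : Matrix (Fin n) (Fin d) ℂ) (k : ℕ) :
    ∃ X, (fromBlocks A E 0 B) ^ k = fromBlocks (A ^ k) X 0 (B ^ k) := by
  induction k with
  | zero => exact ⟨0, by simp [Matrix.fromBlocks_one]⟩
  | succ k ih =>
    obtain ⟨X, hX⟩ := ih
    refine ⟨A ^ k * E + X * B, ?_⟩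
    rw [pow_succ, pow_succ, pow_succ, hX, Matrix.fromBlocks_multiply]
    simp

lemma exp_tri (A : Matrix (Fin n) (Fin n) ℂ) (B : Matrix (Fin d) (Fin d) ℂ)
    (E : Matrix (Fin n) (Fin d) ℂ) :
    exp (fromBlocks A E 0 B) =
      fromBlocks ((exp (fromBlocks A E 0 B)).toBlocks₁₁)
        ((exp (fromBlocks A E 0 B)).toBlocks₁₂) 0 (exp B) := by
  set M := fromBlocks A E 0 B with hM
  have h21 : (exp M).toBlocks₂₁ = 0 := by
    have : (exp M).toBlocks₂₁ = tb21 (exp M) := rfl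
    rw [this, exp_eq_tsum ℂ]; beta_reduce; rw [ContinuousLinearMap.map_tsum _ (show Summable fun k : ℕ => ((k.factorial : ℂ)⁻¹) • M ^ k from expSeries_summable' M)]
    have : ∀ k : ℕ, tb21 ((k.factorial : ℂ)⁻¹ • M ^ k) = 0 := by
      intro k
      obtain ⟨X, hX⟩ := tri_pow A B E k
      rw [_root_.map_smul]
      show (k.factorial : ℂ)⁻¹ • (M ^ k).toBlocks₂₁ = 0
      rw [hX, Matrix.toBlocks_fromBlocks₂₁, smul_zero]
    simp [this]
  have h22 : (exp M).toBlocks₂₂ = exp B := by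
    have h : (exp M).toBlocks₂₂ = tb22 (exp M) := rfl
    rw [h, exp_eq_tsum ℂ]; beta_reduce; rw [ContinuousLinearMap.map_tsum _ (show Summable fun k : ℕ => ((k.factorial : ℂ)⁻¹) • M ^ k from expSeries_summable' M),
      exp_eq_tsum ℂ]
    refine tsum_congr fun k => ?_
    obtain ⟨X, hX⟩ := tri_pow A B E k
    rw [_root_.map_smul]
    show (k.factorial : ℂ)⁻¹ • (M ^ k).toBlocks₂₂ = _
    rw [hX, Matrix.toBlocks_fromBlocks₂₂]
  nth_rewrite 1 [← Matrix.fromBlocks_toBlocks (exp M), h21, h22]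
  rfl

lemma exp_diag (A : Matrix (Fin n) (Fin n) ℂ) (B : Matrix (Fin d) (Fin d) ℂ) :
    exp (fromBlocks A 0 0 B) = fromBlocks (exp A) 0 0 (exp B) := by
  have hpow : ∀ k : ℕ, (fromBlocks A (0 : Matrix (Fin n) (Fin d) ℂ) 0 B) ^ k
      = fromBlocks (A ^ k) 0 0 (B ^ k) := by
    intro k
    induction k with
    | zero => simp [Matrix.fromBlocks_one]
    | succ k ih => rw [pow_succ, pow_succ, pow_succ, ih, Matrix.fromBlocks_multiply]; simp
  set M := fromBlocks A (0 : Matrix (Fin n) (Fin d) ℂ) 0 B with hM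
  have h12 : (exp M).toBlocks₁₂ = 0 := by
    have h : (exp M).toBlocks₁₂ = tb12 (exp M) := rfl
    rw [h, exp_eq_tsum ℂ]; beta_reduce; rw [ContinuousLinearMap.map_tsum _ (show Summable fun k : ℕ => ((k.factorial : ℂ)⁻¹) • M ^ k from expSeries_summable' M)]
    have : ∀ k : ℕ, tb12 ((k.factorial : ℂ)⁻¹ • M ^ k) = 0 := by
      intro k
      rw [_root_.map_smul]
      show (k.factorial : ℂ)⁻¹ • (M ^ k).toBlocks₁₂ = 0
      rw [hpow, Matrix.toBlocks_fromBlocks₁₂, smul_zero]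
    simp [this]
  have htri := exp_tri A B (0 : Matrix (Fin n) (Fin d) ℂ)
  have h11 : (exp M).toBlocks₁₁ = exp A := by
    have h : (exp M).toBlocks₁₁ = tb11 (exp M) := rfl
    rw [h, exp_eq_tsum ℂ]; beta_reduce; rw [ContinuousLinearMap.map_tsum _ (show Summable fun k : ℕ => ((k.factorial : ℂ)⁻¹) • M ^ k from expSeries_summable' M), exp_eq_tsum ℂ]
    refine tsum_congr fun k => ?_
    rw [_root_.map_smul]
    show (k.factorial : ℂ)⁻¹ • (M ^ k).toBlocks₁₁ = _
    rw [hpow, Matrix.toBlocks_fromBlocks₁₁]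
  rw [htri, ← hM, h11, h12]

end Aux

lemma real_smul_eq {p q : Type*} [Fintype p] [Fintype q] (r : ℝ) (X : Matrix p q ℂ) :
    r • X = (r : ℂ) • X := by
  rw [show ((r : ℂ)) = algebraMap ℝ ℂ r from rfl, algebraMap_smul]


/-- Integral representation: `L_exp(A, B, E) = ∫₀¹ exp(tA) E exp((1−t)B) dt`. -/
theorem Lexp_eq_integral {n d : ℕ} (A : Matrix (Fin n) (Fin n) ℂ)
    (B : Matrix (Fin d) (Fin d) ℂ) (E : Matrix (Fin n) (Fin d) ℂ) :
    Lexp A B E =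
      ∫ t : ℝ in (0 : ℝ)..1,
        NormedSpace.exp ((t : ℂ) • A) * E * NormedSpace.exp (((1 - t : ℝ) : ℂ) • B) := by
  classical
  set M : Matrix (Fin n ⊕ Fin d) (Fin n ⊕ Fin d) ℂ := fromBlocks A E 0 B with hMdef
  set M₀ : Matrix (Fin n ⊕ Fin d) (Fin n ⊕ Fin d) ℂ := fromBlocks A 0 0 B with hM0def
  set N : Matrix (Fin n ⊕ Fin d) (Fin n ⊕ Fin d) ℂ := fromBlocks 0 E 0 0 with hNdef
  have hNsub : N = M - M₀ := by
    rw [hNdef, hMdef, hM0def]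
    ext (i | i) (j | j) <;> simp [Matrix.fromBlocks, Matrix.sub_apply]
  have key : ∀ t : ℝ, HasDerivAt (fun s : ℝ => exp ((1 - s) • M₀) * exp (s • M))
      (exp ((1 - t) • M₀) * N * exp (t • M)) t := by
    intro t
    have h1 : HasDerivAt (fun s : ℝ => exp ((1 - s) • M₀))
        ((-1 : ℝ) • (M₀ * exp ((1 - t) • M₀))) t := by
      have hf := hasDerivAt_exp_smul_const' (𝕂 := ℝ) M₀ (1 - t)
      have hg : HasDerivAt (fun s : ℝ => 1 - s) (-1) t := (hasDerivAt_id t).const_sub 1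
      exact hf.scomp t hg
    have h2 : HasDerivAt (fun s : ℝ => exp (s • M)) (M * exp (t • M)) t :=
      hasDerivAt_exp_smul_const' M t
    have h := h1.mul h2
    refine h.congr_deriv ?_
    show (-1 : ℝ) • (M₀ * exp ((1 - t) • M₀)) * exp (t • M) + exp ((1 - t) • M₀) * (M * exp (t • M)) = _
    have hcomm : M₀ * exp ((1 - t) • M₀) = exp ((1 - t) • M₀) * M₀ :=
      (((Commute.refl M₀).smul_right ((1 - t) : ℝ)).exp_right).eq
    rw [hNsub, neg_one_smul, hcomm, mul_sub, sub_mul, neg_mul, neg_add_eq_sub,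
      mul_assoc, mul_assoc]
  have hco : Continuous fun t : ℝ => exp ((1 - t) • M₀) * N * exp (t • M) := by
    have c1 : Continuous fun t : ℝ => exp ((1 - t) • M₀) :=
      exp_continuous.comp ((continuous_const.sub continuous_id).smul continuous_const)
    have c2 : Continuous fun t : ℝ => exp (t • M) :=
      exp_continuous.comp (continuous_id.smul continuous_const)
    exact (c1.mul continuous_const).mul c2
  have hint := intervalIntegral.integral_eq_sub_of_hasDerivAt
    (f := fun s : ℝ => exp ((1 - s) • M₀) * exp (s • M)) (a := 0) (b := 1)
    (fun t _ => key t) (hco.intervalIntegrable 0 1)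
  have hH1 : exp ((1 - (1:ℝ)) • M₀) * exp ((1:ℝ) • M) = exp M := by
    simp [exp_zero]
  have hH0 : exp ((1 - (0:ℝ)) • M₀) * exp ((0:ℝ) • M) = exp M₀ := by
    simp [exp_zero]
  rw [hH1, hH0] at hint
  have hsum : exp M = exp M₀ +
      ∫ t in (0:ℝ)..1, exp ((1 - t) • M₀) * N * exp (t • M) := by
    rw [hint]; abel
  have h12 : (exp M).toBlocks₁₂ =
      ∫ t in (0:ℝ)..1, (exp ((1 - t) • M₀) * N * exp (t • M)).toBlocks₁₂ := by
    rw [hsum]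
    show tb12 (exp M₀ + _) = _
    rw [map_add]
    have h0 : tb12 (exp M₀) = 0 := by
      show (exp M₀).toBlocks₁₂ = 0
      rw [hM0def, exp_diag, Matrix.toBlocks_fromBlocks₁₂]
    rw [h0, zero_add]
    exact (ContinuousLinearMap.intervalIntegral_comp_comm tb12
      (hco.intervalIntegrable 0 1)).symm
  have hblock : ∀ t : ℝ, (exp ((1 - t) • M₀) * N * exp (t • M)).toBlocks₁₂
      = exp (((1 - t : ℝ) : ℂ) • A) * E * exp ((t : ℂ) • B) := by
    intro t
    have e1 : exp ((1 - t) • M₀) =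
        fromBlocks (exp (((1 - t : ℝ) : ℂ) • A)) 0 0 (exp (((1 - t : ℝ) : ℂ) • B)) := by
      rw [hM0def, Matrix.fromBlocks_smul]
      simp only [real_smul_eq, smul_zero]
      rw [exp_diag]
    have e2' : t • M = fromBlocks ((t : ℂ) • A) ((t : ℂ) • E) 0 ((t : ℂ) • B) := by
      rw [hMdef, Matrix.fromBlocks_smul]
      simp only [real_smul_eq, smul_zero]
    have e2 := exp_tri ((t : ℂ) • A) ((t : ℂ) • B) ((t : ℂ) • E)
    rw [e2', e2, e1, hNdef,
      Matrix.fromBlocks_multiply, Matrix.fromBlocks_multiply, Matrix.toBlocks_fromBlocks₁₂]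
    simp [Matrix.mul_assoc]
  have : Lexp A B E = ∫ t in (0:ℝ)..1,
      exp (((1 - t : ℝ) : ℂ) • A) * E * exp ((t : ℂ) • B) := by
    rw [Lexp, ← hMdef, h12]
    exact intervalIntegral.integral_congr fun t _ => hblock t
  rw [this]
  have := intervalIntegral.integral_comp_sub_left
    (f := fun s : ℝ => exp ((s : ℂ) • A) * E * exp (((1 - s : ℝ) : ℂ) • B)) (a := 0) (b := 1) 1
  rw [show (1:ℝ) - 1 = 0 by norm_num, show (1:ℝ) - 0 = 1 by norm_num] at this
  rw [← this]
  refine intervalIntegral.integral_congr fun t _ => ?_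
  norm_num
end

section
/- Let (b_k)_{k≥0} be a sequence of complex numbers such that Σ_{k≥1} k·|b_k|·x^{k−1} converges for every real x ≥ 0 (so f(z) = Σ b_k z^k is entire). Let A ∈ ℂ^{n×n}, B ∈ ℂ^{d×d}, E ∈ ℂ^{n×d}, set M = [[A, E],[0, B]], and let D be the (1,2) block of Σ_{k≥0} b_k M^k (the series converges absolutely). Then ‖D‖ ≤ ‖E‖ · Σ_{k≥1} k·|b_k|·(max(‖A‖, ‖B‖))^{k−1}, where ‖·‖ is the L∞ operator norm on matrices. In particular, the bound is independent of E except through the factor ‖E‖, and depends on A and B only through max(‖A‖,‖B‖). -/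
attribute [local instance] Matrix.linftyOpNormedAddCommGroup
attribute [local instance] Matrix.linftyOpIsBoundedSMul Matrix.linftyOpNormedSpace
attribute [local instance] Matrix.linftyOpNormSMulClass

/-- Norm estimate for the `(1,2)` block of an entire matrix function of the block
triangular matrix `M = [[A, E],[0, B]]`: if `Σ k·|b_k|·x^(k−1)` converges for every
`x ≥ 0`, then `f(M) = Σ b_k M^k` converges and its `(1,2)` block `D` satisfies
`‖D‖ ≤ ‖E‖ ⬝ Σ_{k≥1} k·|b_k|·max(‖A‖,‖B‖)^(k−1)` in the `L∞` operator norm. -/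
theorem norm_toBlocks₁₂_tsum_le {n d : ℕ} (b : ℕ → ℂ)
    (hb : ∀ x : ℝ, 0 ≤ x → Summable fun k : ℕ => (k : ℝ) * ‖b k‖ * x ^ (k - 1))
    (A : Matrix (Fin n) (Fin n) ℂ) (B : Matrix (Fin d) (Fin d) ℂ)
    (E : Matrix (Fin n) (Fin d) ℂ) :
    Summable (fun k : ℕ => b k • Matrix.fromBlocks A E 0 B ^ k) ∧
      ‖(∑' k : ℕ, b k • Matrix.fromBlocks A E 0 B ^ k).toBlocks₁₂‖ ≤
        ‖E‖ * ∑' k : ℕ, (k : ℝ) * ‖b k‖ * max ‖A‖ ‖B‖ ^ (k - 1) := by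
  set M := Matrix.fromBlocks A E 0 B with hMdef
  set m := max ‖A‖ ‖B‖ with hmdef
  have hm0 : (0 : ℝ) ≤ m := le_trans (norm_nonneg A) (le_max_left _ _)
  -- norm of identity ≤ 1
  have hone : ∀ (ι : Type) [Fintype ι] [DecidableEq ι], ‖(1 : Matrix ι ι ℂ)‖ ≤ 1 := by
    intro ι _ _
    rcases isEmpty_or_nonempty ι with h | h
    · rw [Subsingleton.elim (1 : Matrix ι ι ℂ) 0, norm_zero]; norm_num
    · rw [← Matrix.diagonal_one, Matrix.linfty_opNorm_diagonal]
      simp [pi_norm_const]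
  have hApow : ∀ k : ℕ, ‖A ^ k‖ ≤ m ^ k := by
    intro k
    induction k with
    | zero => rw [pow_zero, pow_zero]; exact hone (Fin n)
    | succ k ih =>
      rw [pow_succ, pow_succ]
      exact le_trans (Matrix.linfty_opNorm_mul _ _)
        (mul_le_mul ih (le_max_left _ _) (norm_nonneg _) (pow_nonneg hm0 _))
  have hBpow : ∀ k : ℕ, ‖B ^ k‖ ≤ m ^ k := by
    intro k
    induction k with
    | zero => rw [pow_zero, pow_zero]; exact hone (Fin d)
    | succ k ih =>
      rw [pow_succ, pow_succ]
      exact le_trans (Matrix.linfty_opNorm_mul _ _)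
        (mul_le_mul ih (le_max_right _ _) (norm_nonneg _) (pow_nonneg hm0 _))
  -- block structure of M ^ k
  have key : ∀ k : ℕ, M ^ k =
      Matrix.fromBlocks (A ^ k) ((M ^ k).toBlocks₁₂) 0 (B ^ k) ∧
      ‖(M ^ k).toBlocks₁₂‖ ≤ (k : ℝ) * ‖E‖ * m ^ (k - 1) := by
    intro k
    induction k with
    | zero =>
      have h1 : (M ^ 0) = Matrix.fromBlocks 1 0 0 1 := by
        rw [pow_zero, Matrix.fromBlocks_one]
      have ht : (M ^ 0).toBlocks₁₂ = 0 := by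
        rw [h1, Matrix.toBlocks_fromBlocks₁₂]
      constructor
      · rw [ht, h1, pow_zero, pow_zero]
      · rw [ht, norm_zero]; simp
    | succ k ih =>
      obtain ⟨h1, h2⟩ := ih
      have hmul : M ^ (k + 1) =
          Matrix.fromBlocks (A ^ (k + 1)) (A ^ k * E + (M ^ k).toBlocks₁₂ * B) 0
            (B ^ (k + 1)) := by
        rw [pow_succ, h1, hMdef, Matrix.fromBlocks_multiply]
        simp [pow_succ]
      have hD : (M ^ (k + 1)).toBlocks₁₂ = A ^ k * E + (M ^ k).toBlocks₁₂ * B := by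
        rw [hmul, Matrix.toBlocks_fromBlocks₁₂]
      refine ⟨by rw [hD, hmul], ?_⟩
      rw [hD]
      have step1 : ‖A ^ k * E + (M ^ k).toBlocks₁₂ * B‖ ≤
          m ^ k * ‖E‖ + ((k : ℝ) * ‖E‖ * m ^ (k - 1)) * m := by
        refine le_trans (norm_add_le _ _) (add_le_add ?_ ?_)
        · exact le_trans (Matrix.linfty_opNorm_mul _ _)
            (mul_le_mul_of_nonneg_right (hApow k) (norm_nonneg _))
        · exact le_trans (Matrix.linfty_opNorm_mul _ _)
            (mul_le_mul h2 (le_max_right _ _) (norm_nonneg _)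
              (by positivity))
      refine le_trans step1 ?_
      have hk : ((k : ℝ) * ‖E‖ * m ^ (k - 1)) * m ≤ (k : ℝ) * ‖E‖ * m ^ k := by
        cases k with
        | zero => simp
        | succ k => rw [Nat.add_sub_cancel, mul_assoc, ← pow_succ]
      calc m ^ k * ‖E‖ + ((k : ℝ) * ‖E‖ * m ^ (k - 1)) * m
          ≤ m ^ k * ‖E‖ + (k : ℝ) * ‖E‖ * m ^ k := by linarith
        _ = ((k : ℝ) + 1) * ‖E‖ * m ^ (k + 1 - 1) := by
            rw [Nat.add_sub_cancel]; ring
        _ = ((k + 1 : ℕ) : ℝ) * ‖E‖ * m ^ (k + 1 - 1) := by push_cast; ring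
  -- Summability
  set c : ℝ := max 1 ‖M‖ with hcdef
  have hc0 : (0 : ℝ) ≤ c := le_trans zero_le_one (le_max_left _ _)
  have hMpow : ∀ k : ℕ, ‖M ^ k‖ ≤ c ^ k := by
    intro k
    induction k with
    | zero => rw [pow_zero, pow_zero]; exact hone _
    | succ k ih =>
      rw [pow_succ, pow_succ]
      exact le_trans (Matrix.linfty_opNorm_mul _ _)
        (mul_le_mul ih (le_max_right _ _) (norm_nonneg _) (pow_nonneg hc0 _))
  have hsumc : Summable fun k : ℕ => ‖b k‖ * c ^ k := by
    rw [← summable_nat_add_iff 1]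
    have h1 : Summable fun k : ℕ => (((k + 1 : ℕ) : ℝ) * ‖b (k + 1)‖ * c ^ k) * c :=
      (((summable_nat_add_iff 1).2 (hb c hc0)).congr
        (fun k => by rw [Nat.add_sub_cancel])).mul_right c
    refine h1.of_nonneg_of_le (fun k => by positivity) fun k => ?_
    have h2 : (1 : ℝ) ≤ ((k + 1 : ℕ) : ℝ) := by exact_mod_cast Nat.one_le_iff_ne_zero.2 (Nat.succ_ne_zero k)
    calc ‖b (k + 1)‖ * c ^ (k + 1) = (1 * ‖b (k + 1)‖ * c ^ k) * c := by ring
      _ ≤ (((k + 1 : ℕ) : ℝ) * ‖b (k + 1)‖ * c ^ k) * c :=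
          mul_le_mul_of_nonneg_right (mul_le_mul_of_nonneg_right
            (mul_le_mul_of_nonneg_right h2 (norm_nonneg _)) (pow_nonneg hc0 k)) hc0
  have hsum : Summable fun k : ℕ => b k • M ^ k := by
    refine Summable.of_norm_bounded hsumc fun k => ?_
    rw [norm_smul]
    exact mul_le_mul_of_nonneg_left (hMpow k) (norm_nonneg _)
  refine ⟨hsum, ?_⟩
  -- toBlocks₁₂ as a continuous linear map
  let L : Matrix (Fin n ⊕ Fin d) (Fin n ⊕ Fin d) ℂ →ₗ[ℂ] Matrix (Fin n) (Fin d) ℂ :=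
    { toFun := Matrix.toBlocks₁₂
      map_add' := fun _ _ => rfl
      map_smul' := fun _ _ => rfl }
  have hLcont : Continuous L := L.continuous_of_finiteDimensional
  have htsum : (∑' k : ℕ, b k • M ^ k).toBlocks₁₂ =
      ∑' k : ℕ, b k • (M ^ k).toBlocks₁₂ := by
    have h := ContinuousLinearMap.map_tsum (⟨L, hLcont⟩ :
      Matrix (Fin n ⊕ Fin d) (Fin n ⊕ Fin d) ℂ →L[ℂ] Matrix (Fin n) (Fin d) ℂ) hsum
    refine h.trans (tsum_congr fun k => ?_)
    exact L.map_smul _ _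
  rw [htsum]
  have hterm : ∀ k : ℕ, ‖b k • (M ^ k).toBlocks₁₂‖ ≤
      ‖E‖ * ((k : ℝ) * ‖b k‖ * m ^ (k - 1)) := by
    intro k
    rw [norm_smul]
    calc ‖b k‖ * ‖(M ^ k).toBlocks₁₂‖ ≤ ‖b k‖ * ((k : ℝ) * ‖E‖ * m ^ (k - 1)) :=
          mul_le_mul_of_nonneg_left (key k).2 (norm_nonneg _)
      _ = ‖E‖ * ((k : ℝ) * ‖b k‖ * m ^ (k - 1)) := by ring
  have hsumrhs : Summable fun k : ℕ => ‖E‖ * ((k : ℝ) * ‖b k‖ * m ^ (k - 1)) :=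
    (hb m hm0).mul_left _
  have hsumnorm : Summable fun k : ℕ => ‖b k • (M ^ k).toBlocks₁₂‖ :=
    hsumrhs.of_nonneg_of_le (fun k => norm_nonneg _) hterm
  calc ‖∑' k : ℕ, b k • (M ^ k).toBlocks₁₂‖
      ≤ ∑' k : ℕ, ‖b k • (M ^ k).toBlocks₁₂‖ := norm_tsum_le_tsum_norm hsumnorm
    _ ≤ ∑' k : ℕ, ‖E‖ * ((k : ℝ) * ‖b k‖ * m ^ (k - 1)) :=
        hsumnorm.tsum_le_tsum hterm hsumrhs
    _ = ‖E‖ * ∑' k : ℕ, (k : ℝ) * ‖b k‖ * m ^ (k - 1) := tsum_mul_left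
end

section
/- Let A ∈ ℂ^{n×n}, let p ≥ 1, let w₁, …, w_p ∈ ℂⁿ, and let W ∈ ℂ^{n×p} be the matrix whose columns, from left to right, are w_p, w_{p−1}, …, w₁. Let J ∈ ℂ^{p×p} be the nilpotent Jordan block with ones on the superdiagonal and zeros elsewhere (J_{i,i+1} = 1, all other entries 0). Define φ_j(A) = Σ_{k≥0} A^k / (k+j)! for j ≥ 1 (an everywhere-convergent series). Then the last column of the (1,2) block of exp([[A, W],[0, J]]) equals Σ_{j=1}^{p} φ_j(A)·w_j. -/
open scoped Matrix

/-- `φ_j(A) = Σ_{k≥0} A^k / (k+j)!`, an everywhere-convergent series. -/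
noncomputable def phiFun {n : ℕ} (j : ℕ) (A : Matrix (Fin n) (Fin n) ℂ) :
    Matrix (Fin n) (Fin n) ℂ :=
  ∑' k : ℕ, (((k + j).factorial : ℂ))⁻¹ • A ^ k

noncomputable def Jmat (p : ℕ) : Matrix (Fin p) (Fin p) ℂ :=
  Matrix.of fun i j : Fin p => if (i : ℕ) + 1 = (j : ℕ) then 1 else 0

lemma Jpow (p b : ℕ) : ∀ i j : Fin p,
    ((Jmat p) ^ b) i j = if (i : ℕ) + b = (j : ℕ) then 1 else 0 := by
  induction b with
  | zero =>
    intro i j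
    simp [Matrix.one_apply, Fin.ext_iff]
  | succ b ih =>
    intro i j
    rw [pow_succ, Matrix.mul_apply]
    simp only [ih]
    simp only [Jmat, Matrix.of_apply]
    by_cases h : (i : ℕ) + (b + 1) = (j : ℕ)
    · have hlt : (i : ℕ) + b < p := by omega
      rw [Finset.sum_eq_single_of_mem (⟨(i : ℕ) + b, hlt⟩ : Fin p) (Finset.mem_univ _)]
      · rw [if_pos rfl, if_pos (show ((⟨(i : ℕ) + b, hlt⟩ : Fin p) : ℕ) + 1 = (j : ℕ) by
          simpa using by omega), if_pos h, one_mul]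
      · intro k _ hk
        rw [if_neg, zero_mul]
        intro hik
        exact hk (Fin.ext hik.symm)
    · rw [if_neg h, Finset.sum_eq_zero]
      intro k _
      by_cases h1 : (i : ℕ) + b = (k : ℕ)
      · rw [if_pos h1, if_neg (by omega), mul_zero]
      · rw [if_neg h1, zero_mul]

lemma fromBlocks_pow {n p : ℕ} (A : Matrix (Fin n) (Fin n) ℂ)
    (W : Matrix (Fin n) (Fin p) ℂ) (J : Matrix (Fin p) (Fin p) ℂ) (k : ℕ) :
    (Matrix.fromBlocks A W 0 J) ^ k =
      Matrix.fromBlocks (A ^ k)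
        (∑ b ∈ Finset.range k, A ^ (k - 1 - b) * W * J ^ b) 0 (J ^ k) := by
  induction k with
  | zero => simp [Matrix.fromBlocks_one]
  | succ k ih =>
    rw [pow_succ', ih, Matrix.fromBlocks_multiply]
    have h12 : A * (∑ b ∈ Finset.range k, A ^ (k - 1 - b) * W * J ^ b) + W * J ^ k
        = ∑ b ∈ Finset.range (k + 1), A ^ (k + 1 - 1 - b) * W * J ^ b := by
      rw [Finset.sum_range_succ, Matrix.mul_sum]
      congr 1
      · refine Finset.sum_congr rfl fun b hb => ?_
        rw [Finset.mem_range] at hb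
        rw [← Matrix.mul_assoc, ← Matrix.mul_assoc, ← pow_succ']
        congr 3
        omega
      · simp
    rw [h12]
    simp [← pow_succ']

/-- Let `W` have columns (left to right) `w_p, …, w₁` and let `J` be the nilpotent
Jordan block with ones on the superdiagonal. Then the last column of the `(1,2)` block
of `exp [[A, W],[0, J]]` equals `Σ_{j=1}^p φ_j(A)·w_j`. -/
theorem phi_linear_combination {n p : ℕ} (hp : 1 ≤ p)
    (A : Matrix (Fin n) (Fin n) ℂ) (w : Fin p → Fin n → ℂ) :
    (fun i =>
        (NormedSpace.exp
            (Matrix.fromBlocks A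
              (Matrix.of fun i (j : Fin p) => w j.rev i)
              0
              (Matrix.of fun i j : Fin p => if (i : ℕ) + 1 = (j : ℕ) then 1 else 0))).toBlocks₁₂
          i ⟨p - 1, by omega⟩) =
      ∑ j : Fin p, phiFun ((j : ℕ) + 1) A *ᵥ w j := by
  classical
  letI : SeminormedRing (Matrix (Fin n ⊕ Fin p) (Fin n ⊕ Fin p) ℂ) :=
    Matrix.linftyOpSemiNormedRing
  letI : NormedRing (Matrix (Fin n ⊕ Fin p) (Fin n ⊕ Fin p) ℂ) := Matrix.linftyOpNormedRing
  letI : NormedAlgebra ℂ (Matrix (Fin n ⊕ Fin p) (Fin n ⊕ Fin p) ℂ) :=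
    Matrix.linftyOpNormedAlgebra
  letI : SeminormedRing (Matrix (Fin n) (Fin n) ℂ) := Matrix.linftyOpSemiNormedRing
  letI : NormedRing (Matrix (Fin n) (Fin n) ℂ) := Matrix.linftyOpNormedRing
  letI : NormedAlgebra ℂ (Matrix (Fin n) (Fin n) ℂ) := Matrix.linftyOpNormedAlgebra
  set W : Matrix (Fin n) (Fin p) ℂ := Matrix.of fun i (j : Fin p) => w j.rev i with hW
  set q : Fin p := ⟨p - 1, by omega⟩ with hq
  set M : Matrix (Fin n ⊕ Fin p) (Fin n ⊕ Fin p) ℂ := Matrix.fromBlocks A W 0 (Jmat p) with hM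
  set c : ℕ → Fin n → ℂ := fun b => if h : b < p then w ⟨b, h⟩ else 0 with hc
  -- column of W * J^b
  have hcol : ∀ (b : ℕ) (i : Fin n), (W * (Jmat p) ^ b) i q = c b i := by
    intro b i
    rw [Matrix.mul_apply]
    simp only [Jpow]
    by_cases hb : b < p
    · have hlt : p - 1 - b < p := by omega
      rw [Finset.sum_eq_single_of_mem (⟨p - 1 - b, hlt⟩ : Fin p) (Finset.mem_univ _)]
      · rw [if_pos (show (p - 1 - b) + b = (q : ℕ) by simp [hq]; omega), mul_one]
        simp only [hc, hW, Matrix.of_apply, dif_pos hb]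
        have hrev : (⟨p - 1 - b, hlt⟩ : Fin p).rev = ⟨b, hb⟩ := by
          ext
          simp [Fin.val_rev]
          omega
        rw [hrev]
      · intro k _ hk
        rw [if_neg, mul_zero]
        intro hik
        apply hk
        ext
        simp only [hq] at hik ⊢
        omega
    · rw [Finset.sum_eq_zero]
      · simp [hc, dif_neg hb]
      intro k _
      rw [if_neg, mul_zero]
      omega
  -- top-right block entry of M^k
  have hB : ∀ k : ℕ, (fun i => (M ^ k) (Sum.inl i) (Sum.inr q)) =
      ∑ b ∈ Finset.range k, A ^ (k - 1 - b) *ᵥ c b := by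
    intro k
    funext i
    rw [hM, fromBlocks_pow]
    show (∑ b ∈ Finset.range k, A ^ (k - 1 - b) * W * (Jmat p) ^ b) i q = _
    rw [Matrix.sum_apply, Finset.sum_apply]
    refine Finset.sum_congr rfl fun b _ => ?_
    rw [Matrix.mul_assoc, Matrix.mul_apply]
    simp only [hcol]
    rfl
  -- summability of the matrix series
  have hsumA : ∀ b : ℕ, Summable fun a : ℕ => (((a + b + 1).factorial : ℂ))⁻¹ • A ^ a := by
    intro b
    refine Summable.of_norm_bounded (NormedSpace.norm_expSeries_summable' (𝕂 := ℂ) A) ?_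
    intro a
    rw [norm_smul, norm_smul]
    apply mul_le_mul_of_nonneg_right _ (norm_nonneg _)
    rw [norm_inv, norm_inv, Complex.norm_natCast, Complex.norm_natCast]
    apply inv_anti₀
    · exact_mod_cast Nat.factorial_pos a
    · exact_mod_cast Nat.factorial_le (by omega)
  -- the continuous linear map X ↦ X *ᵥ c b
  have key : ∀ b : ℕ,
      Summable (fun a : ℕ => (((a + b + 1).factorial : ℂ))⁻¹ • (A ^ a *ᵥ c b)) ∧
      (∑' a : ℕ, (((a + b + 1).factorial : ℂ))⁻¹ • (A ^ a *ᵥ c b))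
        = phiFun (b + 1) A *ᵥ c b := by
    intro b
    let Φ : Matrix (Fin n) (Fin n) ℂ →ₗ[ℂ] (Fin n → ℂ) :=
      { toFun := fun X => X *ᵥ c b
        map_add' := fun X Y => Matrix.add_mulVec X Y (c b)
        map_smul' := fun r X => Matrix.smul_mulVec r X (c b) }
    let Φc : Matrix (Fin n) (Fin n) ℂ →L[ℂ] (Fin n → ℂ) := LinearMap.toContinuousLinearMap Φ
    have hmap : ∀ (X : Matrix (Fin n) (Fin n) ℂ), Φc X = X *ᵥ c b := fun _ => rfl
    constructor
    · refine ((hsumA b).map Φc.toLinearMap.toAddMonoidHom Φc.continuous).congr fun a => ?_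
      show Φc (_ • A ^ a) = _
      rw [map_smul, hmap]
    · have h5 := (Φc.map_tsum (hsumA b)).symm
      simp only [hmap, Matrix.smul_mulVec] at h5
      rw [h5, phiFun]
      exact congrArg (· *ᵥ c b) (tsum_congr fun a => by rw [Nat.add_assoc])
  -- the reindexed family
  set g : ℕ → ℕ → (Fin n → ℂ) := fun b k =>
    if b < k then ((k.factorial : ℂ))⁻¹ • (A ^ (k - 1 - b) *ᵥ c b) else 0 with hg
  have hshift : ∀ b : ℕ, (fun a : ℕ => g b (a + (b + 1)))
      = fun a : ℕ => (((a + b + 1).factorial : ℂ))⁻¹ • (A ^ a *ᵥ c b) := by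
    intro b
    funext a
    rw [hg]
    simp only
    rw [if_pos (by omega)]
    have e1 : a + (b + 1) - 1 - b = a := by omega
    have e2 : a + (b + 1) = a + b + 1 := by omega
    rw [e1, e2]
  have hinj : ∀ b : ℕ, Function.Injective (fun a : ℕ => a + (b + 1)) :=
    fun b => add_left_injective (b + 1)
  have hzero : ∀ b : ℕ, ∀ k ∉ Set.range (fun a : ℕ => a + (b + 1)), g b k = 0 := by
    intro b k hk
    rw [hg]
    simp only
    rw [if_neg]
    intro hbk
    exact hk ⟨k - (b + 1), show k - (b + 1) + (b + 1) = k by omega⟩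
  have hgsum : ∀ b : ℕ, Summable (g b) := by
    intro b
    rw [← Function.Injective.summable_iff (hinj b) (hzero b)]
    show Summable fun a : ℕ => g b (a + (b + 1))
    rw [hshift b]
    exact (key b).1
  have hgtsum : ∀ b : ℕ, ∑' k : ℕ, g b k = phiFun (b + 1) A *ᵥ c b := by
    intro b
    have hsupp : Function.support (g b) ⊆ Set.range (fun a : ℕ => a + (b + 1)) := by
      intro k hk
      by_contra h'
      exact hk (hzero b k h')
    rw [← Function.Injective.tsum_eq (hinj b) hsupp]
    show ∑' a : ℕ, g b (a + (b + 1)) = _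
    rw [hshift b]
    exact (key b).2
  -- main computation
  have lhs_eq : (fun i => (NormedSpace.exp M).toBlocks₁₂ i q)
      = ∑ b ∈ Finset.range p, phiFun (b + 1) A *ᵥ c b := by
    have h1 : (fun i => (NormedSpace.exp M).toBlocks₁₂ i q)
        = fun i => (NormedSpace.exp M) (Sum.inl i) (Sum.inr q) := rfl
    rw [h1]
    let L : Matrix (Fin n ⊕ Fin p) (Fin n ⊕ Fin p) ℂ →ₗ[ℂ] (Fin n → ℂ) :=
      { toFun := fun X => fun i => X (Sum.inl i) (Sum.inr q)
        map_add' := fun X Y => rfl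
        map_smul' := fun r X => rfl }
    let Lc := LinearMap.toContinuousLinearMap L
    have hLc : ∀ X : Matrix (Fin n ⊕ Fin p) (Fin n ⊕ Fin p) ℂ,
        Lc X = fun i => X (Sum.inl i) (Sum.inr q) := fun _ => rfl
    have h2 : (fun i => (NormedSpace.exp M) (Sum.inl i) (Sum.inr q)) = Lc (NormedSpace.exp M) := rfl
    rw [h2, NormedSpace.exp_eq_tsum (𝕂 := ℂ),
      Lc.map_tsum (NormedSpace.expSeries_summable' (𝕂 := ℂ) M)]
    have h3 : ∀ k : ℕ, Lc (((k.factorial : ℂ))⁻¹ • M ^ k) = ∑ b ∈ Finset.range p, g b k := by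
      intro k
      rw [map_smul, hLc, hB k, Finset.smul_sum]
      have h4 : ∀ b ∈ Finset.range k,
          ((k.factorial : ℂ))⁻¹ • (A ^ (k - 1 - b) *ᵥ c b) = g b k := by
        intro b hb
        rw [Finset.mem_range] at hb
        rw [hg]
        simp only
        rw [if_pos hb]
      rw [Finset.sum_congr rfl h4]
      -- now extend / restrict index ranges
      have hle1 : Finset.range k ⊆ Finset.range (max k p) :=
        Finset.range_subset_range.2 (le_max_left _ _)
      have hle2 : Finset.range p ⊆ Finset.range (max k p) :=
        Finset.range_subset_range.2 (le_max_right _ _)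
      rw [Finset.sum_subset hle1 (fun b _ hb => by
        rw [Finset.mem_range, not_lt] at hb
        rw [hg]; simp only; rw [if_neg (by omega)]),
        ← Finset.sum_subset hle2 (fun b _ hb => by
        rw [Finset.mem_range, not_lt] at hb
        have : c b = 0 := by rw [hc]; simp only; rw [dif_neg (by omega)]
        simp [hg, this])]
    rw [tsum_congr h3, Summable.tsum_finsetSum (fun b _ => hgsum b)]
    exact Finset.sum_congr rfl fun b _ => hgtsum b
  have final : (fun i => (NormedSpace.exp M).toBlocks₁₂ i q)
      = ∑ j : Fin p, phiFun ((j : ℕ) + 1) A *ᵥ w j := by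
    rw [lhs_eq, ← Fin.sum_univ_eq_sum_range (fun b => phiFun (b + 1) A *ᵥ c b) p]
    refine Finset.sum_congr rfl fun j _ => ?_
    have : c (j : ℕ) = w j := by
      rw [hc]; simp only; rw [dif_pos j.isLt]
    rw [this]
  exact final
end
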